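/- For any acyclic orientation O of a graph Y and any non-bridge edge e = {v,w}, exactly one of the following holds: reversing e in O yields a non-acyclic orientation; or reversing e preserves acyclicity. Moreover, the map β_e sending O to its restriction to Y with e deleted (when the reversal of e is not acyclic, or when e is oriented (v,w) and its reversal is acyclic), and to the induced orientation of the contraction Y/e (when e is oriented (w,v) and its reversal is acyclic), is a bijection from Acyc(Y) onto Acyc(Y−e) ∪ Acyc(Y/e). -/

import Mathlib

namespace AcycPaper

variable {V : Type*}

/-- `r` is an orientation of the graph `Y`: exactly one direction per edge. -/
def IsOrientation (Y : SimpleGraph V) (r : V → V → Prop) : Prop :=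
  (∀ i j, Y.Adj i j ↔ (r i j ∨ r j i)) ∧ ∀ i j, r i j → ¬ r j i

/-- A relation is acyclic if it has no directed cycles. -/
def IsAcyclicRel (r : V → V → Prop) : Prop := ∀ v, ¬ Relation.TransGen r v v

/-- The set of acyclic orientations of `Y`. -/
def Acyc (Y : SimpleGraph V) : Set (V → V → Prop) :=
  {r | IsOrientation Y r ∧ IsAcyclicRel r}

/-- `v` is a source: no edge points into `v`. -/
def IsSource (r : V → V → Prop) (v : V) : Prop := ∀ j, ¬ r j v

open Classical in
/-- Click (source-to-sink move) at `v`: reverse all edges incident to `v`. -/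
def click (r : V → V → Prop) (v : V) : V → V → Prop :=
  fun i j => if v = i ∨ v = j then r j i else r i j

/-- One click step between acyclic orientations. -/
def ClickStep (Y : SimpleGraph V) (r r' : V → V → Prop) : Prop :=
  r ∈ Acyc Y ∧ ∃ v, IsSource r v ∧ r' = click r v

/-- κ-equivalence: the equivalence relation generated by clicks. -/
def KEquiv (Y : SimpleGraph V) : (V → V → Prop) → (V → V → Prop) → Prop :=
  Relation.EqvGen (ClickStep Y)

/-- The set of κ-equivalence classes of acyclic orientations. -/
def KQuot (Y : SimpleGraph V) := Quot (fun a b : Acyc Y => ClickStep Y a.1 b.1)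

/-- κ(Y): number of κ-equivalence classes. -/
noncomputable def kappa (Y : SimpleGraph V) : ℕ := Nat.card (KQuot Y)

/-- α(Y): number of acyclic orientations. -/
noncomputable def alpha (Y : SimpleGraph V) : ℕ := Nat.card (Acyc Y)


/-- The simple graph obtained from Y by contracting the edge {v,w}: the vertex w
becomes isolated and its former neighbours are attached to v instead. -/
def contractG (Y : SimpleGraph V) (v w : V) : SimpleGraph V where
  Adj a b := a ≠ w ∧ b ≠ w ∧ a ≠ b ∧
    ((Y.deleteEdges {s(v, w)}).Adj a b ∨ (a = v ∧ Y.Adj w b) ∨ (b = v ∧ Y.Adj a w))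
  symm := by
    constructor
    rintro a b ⟨h1, h2, h3, h4⟩
    refine ⟨h2, h1, h3.symm, ?_⟩
    rcases h4 with h | ⟨rfl, h⟩ | ⟨rfl, h⟩
    · exact Or.inl h.symm
    · exact Or.inr (Or.inr ⟨rfl, h.symm⟩)
    · exact Or.inr (Or.inl ⟨rfl, h.symm⟩)
  loopless := by constructor; rintro a ⟨_, _, h, _⟩; exact h rfl

/-- The orientation induced on the deleted graph Y − e (restriction). -/
def delRel (r : V → V → Prop) (v w : V) : V → V → Prop :=
  fun i j => r i j ∧ ¬((i = v ∧ j = w) ∨ (i = w ∧ j = v))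

open Classical in
/-- The orientation obtained from r by reversing the edge {v,w}. -/
def revEdge (r : V → V → Prop) (v w : V) : V → V → Prop :=
  fun i j => if (i = v ∧ j = w) ∨ (i = w ∧ j = v) then r j i else r i j

/-- The orientation induced on the contracted graph Y/e. -/
def contractRel (r : V → V → Prop) (v w : V) : V → V → Prop :=
  fun a b => a ≠ w ∧ b ≠ w ∧ a ≠ b ∧
    (delRel r v w a b ∨ (a = v ∧ r w b) ∨ (b = v ∧ r a w))

section Helpers

open Relation

variable {Y : SimpleGraph V} {v w : V} {r t c : V → V → Prop}

lemma acyc_irrefl (hr : r ∈ Acyc Y) (i : V) : ¬ r i i := fun h => hr.2 i (TransGen.single h)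

lemma asymm_of (hr : r ∈ Acyc Y) {i j : V} (h : r i j) : ¬ r j i := hr.1.2 i j h

lemma ne_of_rel (hr : r ∈ Acyc Y) {i j : V} (h : r i j) : i ≠ j := by
  rintro rfl; exact acyc_irrefl hr i h

lemma adj_of_rel (hr : r ∈ Acyc Y) {i j : V} (h : r i j) : Y.Adj i j := (hr.1.1 i j).2 (Or.inl h)

lemma delRel_transGen {i j : V} (h : TransGen (delRel r v w) i j) : TransGen r i j :=
  TransGen.mono (fun _ _ hx => hx.1) _ _ h

lemma delRel_mem (hr : r ∈ Acyc Y) : delRel r v w ∈ Acyc (Y.deleteEdges {s(v,w)}) := by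
  refine ⟨⟨fun i j => ?_, fun i j hij hji => hr.1.2 i j hij.1 hji.1⟩,
    fun x hx => hr.2 x (delRel_transGen hx)⟩
  rw [SimpleGraph.deleteEdges_adj, Set.mem_singleton_iff, Sym2.eq_iff, hr.1.1 i j]
  unfold delRel
  tauto

/-- Extend a relation by one directed edge. -/
def extend (t : V → V → Prop) (a b : V) : V → V → Prop := fun i j => t i j ∨ (i = a ∧ j = b)

lemma extend_acyclic {a b : V} (hab : a ≠ b) (hacyc : ∀ x, ¬ TransGen t x x)
    (hba : ¬ TransGen t b a) (x : V) : ¬ TransGen (extend t a b) x x := by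
  have main : ∀ x y, TransGen (extend t a b) x y →
      TransGen t x y ∨ (ReflTransGen t x a ∧ ReflTransGen t b y) := by
    intro x y h
    induction h with
    | single h =>
      rcases h with h | ⟨rfl, rfl⟩
      · exact Or.inl (TransGen.single h)
      · exact Or.inr ⟨ReflTransGen.refl, ReflTransGen.refl⟩
    | tail hxy hstep ih =>
      rcases hstep with hstep | ⟨rfl, rfl⟩
      · rcases ih with ih | ⟨h1, h2⟩
        · exact Or.inl (ih.tail hstep)
        · exact Or.inr ⟨h1, h2.tail hstep⟩
      · rcases ih with ih | ⟨h1, h2⟩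
        · exact Or.inr ⟨ih.to_reflTransGen, ReflTransGen.refl⟩
        · rcases reflTransGen_iff_eq_or_transGen.mp h2 with h | h
          · exact absurd h hab
          · exact absurd h hba
  intro h
  rcases main x x h with h | ⟨h1, h2⟩
  · exact hacyc x h
  · rcases reflTransGen_iff_eq_or_transGen.mp (h2.trans h1) with h | h
    · exact hab h
    · exact hba h

lemma t_pair_false (ht : t ∈ Acyc (Y.deleteEdges {s(v,w)})) : ¬ t v w ∧ ¬ t w v := by
  have h1 : ¬ (Y.deleteEdges {s(v,w)}).Adj v w := by
    rw [SimpleGraph.deleteEdges_adj]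
    rintro ⟨-, h⟩
    exact h rfl
  constructor
  · intro h; exact h1 (adj_of_rel ht h)
  · intro h; exact h1 ((adj_of_rel ht h).symm)

lemma adj_iff_del (hY : Y.Adj v w) (i j : V) :
    Y.Adj i j ↔ (Y.deleteEdges {s(v,w)}).Adj i j ∨ ((i = v ∧ j = w) ∨ (i = w ∧ j = v)) := by
  rw [SimpleGraph.deleteEdges_adj, Set.mem_singleton_iff, Sym2.eq_iff]
  constructor
  · intro h
    by_cases hp : (i = v ∧ j = w) ∨ (i = w ∧ j = v)
    · exact Or.inr hp
    · exact Or.inl ⟨h, hp⟩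
  · rintro (⟨h, -⟩ | ⟨⟨rfl, rfl⟩ | ⟨rfl, rfl⟩⟩)
    exacts [h, hY, hY.symm]

lemma extend_mem (hY : Y.Adj v w) (ht : t ∈ Acyc (Y.deleteEdges {s(v,w)})) {a b : V}
    (hab : (a = v ∧ b = w) ∨ (a = w ∧ b = v)) (hba : ¬ TransGen t b a) :
    extend t a b ∈ Acyc Y := by
  have hvw : v ≠ w := hY.ne
  have hne : a ≠ b := by rcases hab with ⟨rfl, rfl⟩ | ⟨rfl, rfl⟩; exacts [hvw, hvw.symm]
  have hpf := t_pair_false ht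
  refine ⟨⟨fun i j => ?_, ?_⟩, extend_acyclic hne (fun x hx => ht.2 x hx) hba⟩
  · rw [adj_iff_del hY i j]
    constructor
    · rintro (h | ⟨⟨rfl, rfl⟩ | ⟨rfl, rfl⟩⟩)
      · rcases (ht.1.1 i j).1 h with h | h
        · exact Or.inl (Or.inl h)
        · exact Or.inr (Or.inl h)
      · rcases hab with ⟨rfl, rfl⟩ | ⟨rfl, rfl⟩
        · exact Or.inl (Or.inr ⟨rfl, rfl⟩)
        · exact Or.inr (Or.inr ⟨rfl, rfl⟩)
      · rcases hab with ⟨rfl, rfl⟩ | ⟨rfl, rfl⟩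
        · exact Or.inr (Or.inr ⟨rfl, rfl⟩)
        · exact Or.inl (Or.inr ⟨rfl, rfl⟩)
    · rintro ((h | ⟨rfl, rfl⟩) | (h | ⟨rfl, rfl⟩))
      · exact Or.inl ((ht.1.1 i j).2 (Or.inl h))
      · exact Or.inr hab
      · exact Or.inl ((ht.1.1 i j).2 (Or.inr h))
      · rcases hab with ⟨rfl, rfl⟩ | ⟨rfl, rfl⟩
        · exact Or.inr (Or.inr ⟨rfl, rfl⟩)
        · exact Or.inr (Or.inl ⟨rfl, rfl⟩)
  · intro i j h1 h2
    rcases h1 with h1 | ⟨rfl, rfl⟩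
    · rcases h2 with h2 | ⟨h2a, h2b⟩
      · exact ht.1.2 i j h1 h2
      · subst h2a; subst h2b
        rcases hab with ⟨rfl, rfl⟩ | ⟨rfl, rfl⟩
        exacts [hpf.2 h1, hpf.1 h1]
    · rcases h2 with h2 | ⟨h2a, h2b⟩
      · rcases hab with ⟨rfl, rfl⟩ | ⟨rfl, rfl⟩
        exacts [hpf.2 h2, hpf.1 h2]
      · exact hne h2a.symm

lemma delRel_extend (ht : t ∈ Acyc (Y.deleteEdges {s(v,w)})) {a b : V}
    (hab : (a = v ∧ b = w) ∨ (a = w ∧ b = v)) :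
    delRel (extend t a b) v w = t := by
  have hpf := t_pair_false ht
  funext i j
  apply propext
  unfold delRel extend
  constructor
  · rintro ⟨h | ⟨rfl, rfl⟩, hp⟩
    · exact h
    · exact absurd hab hp
  · intro h
    refine ⟨Or.inl h, ?_⟩
    rintro (⟨rfl, rfl⟩ | ⟨rfl, rfl⟩)
    exacts [hpf.1 h, hpf.2 h]

end Helpers

section Helpers2

open Relation

variable [DecidableEq V] {Y : SimpleGraph V} {v w : V} {r t c : V → V → Prop}

lemma contractG_adj {a b : V} : (contractG Y v w).Adj a b ↔ a ≠ w ∧ b ≠ w ∧ a ≠ b ∧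
    ((Y.deleteEdges {s(v, w)}).Adj a b ∨ (a = v ∧ Y.Adj w b) ∨ (b = v ∧ Y.Adj a w)) := Iff.rfl

lemma delAdj_iff (hr : r ∈ Acyc Y) (i j : V) :
    (Y.deleteEdges {s(v,w)}).Adj i j ↔ delRel r v w i j ∨ delRel r v w j i := by
  rw [SimpleGraph.deleteEdges_adj, Set.mem_singleton_iff, Sym2.eq_iff, hr.1.1 i j]
  unfold delRel
  tauto

lemma rev_orientation (hr : IsOrientation Y r) : IsOrientation Y (revEdge r v w) := by
  classical
  constructor
  · intro i j
    rw [hr.1 i j]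
    unfold revEdge
    by_cases hp : (i = v ∧ j = w) ∨ (i = w ∧ j = v)
    · have hp' : (j = v ∧ i = w) ∨ (j = w ∧ i = v) := by tauto
      rw [if_pos hp, if_pos hp']
      tauto
    · have hp' : ¬((j = v ∧ i = w) ∨ (j = w ∧ i = v)) := by tauto
      rw [if_neg hp, if_neg hp']
  · intro i j hij hji
    unfold revEdge at hij hji
    by_cases hp : (i = v ∧ j = w) ∨ (i = w ∧ j = v)
    · have hp' : (j = v ∧ i = w) ∨ (j = w ∧ i = v) := by tauto
      rw [if_pos hp] at hij
      rw [if_pos hp'] at hji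
      exact hr.2 j i hij hji
    · have hp' : ¬((j = v ∧ i = w) ∨ (j = w ∧ i = v)) := by tauto
      rw [if_neg hp] at hij
      rw [if_neg hp'] at hji
      exact hr.2 i j hij hji

lemma rev_eq (hr : r ∈ Acyc Y) (hvw : v ≠ w) (hwv : r w v) :
    revEdge r v w = extend (delRel r v w) v w := by
  classical
  have hnvw : ¬ r v w := hr.1.2 w v hwv
  funext i j
  apply propext
  unfold revEdge extend delRel
  by_cases h1 : i = v ∧ j = w
  · obtain ⟨rfl, rfl⟩ := h1
    rw [if_pos (Or.inl ⟨rfl, rfl⟩)]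
    simp [hwv]
  · by_cases h2 : i = w ∧ j = v
    · obtain ⟨rfl, rfl⟩ := h2
      rw [if_pos (Or.inr ⟨rfl, rfl⟩)]
      simp [hnvw, hvw.symm]
    · rw [if_neg (by tauto)]
      constructor
      · intro h
        exact Or.inl ⟨h, by tauto⟩
      · rintro (⟨h, -⟩ | ⟨rfl, rfl⟩)
        · exact h
        · exact absurd ⟨rfl, rfl⟩ h1

lemma s_le_rev {i j : V} (h : delRel r v w i j) : revEdge r v w i j := by
  classical
  unfold revEdge
  rw [if_neg h.2]
  exact h.1

lemma no_s_cycle (hr : r ∈ Acyc Y) (x : V) : ¬ TransGen (delRel r v w) x x :=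
  fun h => hr.2 x (delRel_transGen h)

lemma noMM (hr : r ∈ Acyc Y) (hvw : v ≠ w) (hwv : r w v) (hrev : revEdge r v w ∈ Acyc Y) :
    ∀ m m', (m = v ∨ m = w) → (m' = v ∨ m' = w) → ¬ TransGen (delRel r v w) m m' := by
  have h1 : ¬ TransGen (delRel r v w) v w := fun h => hr.2 v ((delRel_transGen h).tail hwv)
  have h2 : ¬ TransGen (delRel r v w) w v := by
    intro h
    apply hrev.2 v
    have hedge : revEdge r v w v w := by
      unfold revEdge
      rw [if_pos (Or.inl ⟨rfl, rfl⟩)]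
      exact hwv
    exact TransGen.head hedge (TransGen.mono (fun i j hij => s_le_rev hij) _ _ h)
  rintro m m' (rfl | rfl) (rfl | rfl) h
  · exact no_s_cycle hr _ h
  · exact h1 h
  · exact h2 h
  · exact no_s_cycle hr _ h

lemma contract_mem (hr : r ∈ Acyc Y) (hvw : v ≠ w) (hwv : r w v)
    (hrev : revEdge r v w ∈ Acyc Y) : contractRel r v w ∈ Acyc (contractG Y v w) := by
  have hM := noMM hr hvw hwv hrev
  refine ⟨⟨?_, ?_⟩, ?_⟩
  · intro a b
    rw [contractG_adj, delAdj_iff hr a b, hr.1.1 w b, hr.1.1 a w]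
    unfold contractRel
    constructor
    · rintro ⟨haw, hbw, hab, (h | h) | ⟨rfl, (h | h)⟩ | ⟨rfl, (h | h)⟩⟩
      · exact Or.inl ⟨haw, hbw, hab, Or.inl h⟩
      · exact Or.inr ⟨hbw, haw, hab.symm, Or.inl h⟩
      · exact Or.inl ⟨haw, hbw, hab, Or.inr (Or.inl ⟨rfl, h⟩)⟩
      · exact Or.inr ⟨hbw, haw, hab.symm, Or.inr (Or.inr ⟨rfl, h⟩)⟩
      · exact Or.inl ⟨haw, hbw, hab, Or.inr (Or.inr ⟨rfl, h⟩)⟩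
      · exact Or.inr ⟨hbw, haw, hab.symm, Or.inr (Or.inl ⟨rfl, h⟩)⟩
    · rintro (⟨haw, hbw, hab, h | ⟨rfl, h⟩ | ⟨rfl, h⟩⟩ | ⟨hbw, haw, hba, h | ⟨rfl, h⟩ | ⟨rfl, h⟩⟩)
      · exact ⟨haw, hbw, hab, Or.inl (Or.inl h)⟩
      · exact ⟨haw, hbw, hab, Or.inr (Or.inl ⟨rfl, Or.inl h⟩)⟩
      · exact ⟨haw, hbw, hab, Or.inr (Or.inr ⟨rfl, Or.inl h⟩)⟩
      · exact ⟨haw, hbw, hba.symm, Or.inl (Or.inr h)⟩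
      · exact ⟨haw, hbw, hba.symm, Or.inr (Or.inr ⟨rfl, Or.inr h⟩)⟩
      · exact ⟨haw, hbw, hba.symm, Or.inr (Or.inl ⟨rfl, Or.inr h⟩)⟩
  · rintro a b ⟨haw, hbw, hab, h1⟩ ⟨-, -, -, h2⟩
    rcases h1 with h1 | ⟨ha1, h1⟩ | ⟨hb1, h1⟩
    · rcases h2 with h2 | ⟨hb2, h2⟩ | ⟨ha2, h2⟩
      · exact hr.1.2 a b h1.1 h2.1
      · refine hM w v (Or.inr rfl) (Or.inl rfl) ((TransGen.single ⟨h2, ?_⟩).tail (hb2 ▸ h1))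
        rintro (⟨hh, -⟩ | ⟨-, hh⟩)
        · exact hvw hh.symm
        · exact hab (hh.trans hb2.symm)
      · refine hM v w (Or.inl rfl) (Or.inr rfl) ((TransGen.single (ha2 ▸ h1)).tail ⟨h2, ?_⟩)
        rintro (⟨hh, -⟩ | ⟨hh, -⟩)
        · exact hab (ha2.trans hh.symm)
        · exact hbw hh
    · rcases h2 with h2 | ⟨hb2, h2⟩ | ⟨-, h2⟩
      · refine hM w v (Or.inr rfl) (Or.inl rfl) ((TransGen.single ⟨h1, ?_⟩).tail (ha1 ▸ h2))
        rintro (⟨hh, -⟩ | ⟨-, hh⟩)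
        · exact hvw hh.symm
        · exact hab (ha1.trans hh.symm)
      · exact hab (ha1.trans hb2.symm)
      · exact hr.1.2 w b h1 h2
    · rcases h2 with h2 | ⟨-, h2⟩ | ⟨ha2, h2⟩
      · refine hM v w (Or.inl rfl) (Or.inr rfl) ((TransGen.single (hb1 ▸ h2)).tail ⟨h1, ?_⟩)
        rintro (⟨hh, -⟩ | ⟨-, hh⟩)
        · exact hab (hh.trans hb1.symm)
        · exact hvw hh.symm
      · exact hr.1.2 a w h1 h2
      · exact hab (ha2.trans hb1.symm)
  · intro x hx
    have step : ∀ a b, contractRel r v w a b →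
        ∃ a' b', (a' = a ∨ (a = v ∧ a' = w)) ∧ (b' = b ∨ (b = v ∧ b' = w)) ∧
          delRel r v w a' b' := by
      rintro a b ⟨haw, hbw, hab, h | ⟨rfl, h⟩ | ⟨rfl, h⟩⟩
      · exact ⟨a, b, Or.inl rfl, Or.inl rfl, h⟩
      · refine ⟨w, b, Or.inr ⟨rfl, rfl⟩, Or.inl rfl, h, ?_⟩
        rintro (⟨hh, -⟩ | ⟨-, hh⟩)
        exacts [hvw hh.symm, hab hh.symm]
      · refine ⟨a, w, Or.inl rfl, Or.inr ⟨rfl, rfl⟩, h, ?_⟩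
        rintro (⟨hh, -⟩ | ⟨-, hh⟩)
        exacts [hab hh, hvw hh.symm]
    have main : ∀ p q, TransGen (contractRel r v w) p q →
        ∃ b', (b' = q ∨ (q = v ∧ b' = w)) ∧
          ((∃ a', (a' = p ∨ (p = v ∧ a' = w)) ∧ TransGen (delRel r v w) a' b') ∨
           ((∃ a' m, (a' = p ∨ (p = v ∧ a' = w)) ∧ (m = v ∨ m = w) ∧
              TransGen (delRel r v w) a' m) ∧
            (∃ m', (m' = v ∨ m' = w) ∧ TransGen (delRel r v w) m' b'))) := by
      intro p q h
      induction h with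
      | single h =>
        obtain ⟨a', b', ha, hb, hstep⟩ := step _ _ h
        exact ⟨b', hb, Or.inl ⟨a', ha, TransGen.single hstep⟩⟩
      | tail hpq hstep ih =>
        obtain ⟨b2, c', hb2, hc, hstep'⟩ := step _ _ hstep
        obtain ⟨b1, hb1, rest⟩ := ih
        by_cases hbb : b1 = b2
        · subst hbb
          rcases rest with ⟨a', ha, hT⟩ | ⟨hfirst, m', hm', hT⟩
          · exact ⟨c', hc, Or.inl ⟨a', ha, hT.tail hstep'⟩⟩
          · exact ⟨c', hc, Or.inr ⟨hfirst, m', hm', hT.tail hstep'⟩⟩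
        · have hmm : (b1 = v ∨ b1 = w) ∧ (b2 = v ∨ b2 = w) := by
            rcases hb1 with h1' | ⟨hyv, h1'⟩
            · rcases hb2 with h2' | ⟨hyv, h2'⟩
              · exact absurd (h1'.trans h2'.symm) hbb
              · exact ⟨Or.inl (h1'.trans hyv), Or.inr h2'⟩
            · rcases hb2 with h2' | ⟨-, h2'⟩
              · exact ⟨Or.inr h1', Or.inl (h2'.trans hyv)⟩
              · exact absurd (h1'.trans h2'.symm) hbb
          rcases rest with ⟨a', ha, hT⟩ | ⟨-, m', hm', hT⟩
          · exact ⟨c', hc, Or.inr ⟨⟨a', b1, ha, hmm.1, hT⟩, b2, hmm.2,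
              TransGen.single hstep'⟩⟩
          · exact absurd hT (hM m' b1 hm' hmm.1)
    obtain ⟨b', hb', rest⟩ := main x x hx
    rcases rest with ⟨a', ha', hT⟩ | ⟨⟨a', m, ha', hm, hT1⟩, m', hm', hT2⟩
    · rcases ha' with ha' | ⟨hxv, ha'⟩
      · rcases hb' with hb' | ⟨hxv, hb'⟩
        · exact no_s_cycle hr x (ha' ▸ hb' ▸ hT)
        · exact hM a' b' (Or.inl (ha'.trans hxv)) (Or.inr hb') hT
      · rcases hb' with hb' | ⟨-, hb'⟩
        · exact hM a' b' (Or.inr ha') (Or.inl (hb'.trans hxv)) hT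
        · exact hM a' b' (Or.inr ha') (Or.inr hb') hT
    · by_cases hba : b' = a'
      · exact hM m' m hm' hm ((hba ▸ hT2).trans hT1)
      · rcases ha' with ha' | ⟨hxv, ha'⟩
        · rcases hb' with hb' | ⟨hxv, hb'⟩
          · exact hba (hb'.trans ha'.symm)
          · exact hM m' b' hm' (Or.inr hb') hT2
        · rcases hb' with hb' | ⟨-, hb'⟩
          · exact hM m' b' hm' (Or.inl (hb'.trans hxv)) hT2
          · exact hM m' b' hm' (Or.inr hb') hT2

/-- Candidate inverse orientation on `Y` induced by an orientation of the contraction. -/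
def invC (Y : SimpleGraph V) (v w : V) (c : V → V → Prop) : V → V → Prop :=
  fun i j => (i = w ∧ j = v) ∨ (i = w ∧ j ≠ v ∧ Y.Adj w j ∧ c v j) ∨
    (j = w ∧ i ≠ v ∧ Y.Adj i w ∧ c i v) ∨ (i ≠ w ∧ j ≠ w ∧ Y.Adj i j ∧ c i j)

lemma invC_proj {i j : V} (h : invC Y v w c i j) :
    (i = w ∧ j = v) ∨ c (if i = w then v else i) (if j = w then v else j) := by
  rcases h with ⟨rfl, rfl⟩ | ⟨rfl, hjv, hadj, h⟩ | ⟨rfl, hiv, hadj, h⟩ | ⟨hiw, hjw, hadj, h⟩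
  · exact Or.inl ⟨rfl, rfl⟩
  · right
    rw [if_pos rfl, if_neg (Ne.symm hadj.ne)]
    exact h
  · right
    rw [if_neg hadj.ne, if_pos rfl]
    exact h
  · right
    rw [if_neg hiw, if_neg hjw]
    exact h

lemma invC_mem (hY : Y.Adj v w) (hc : c ∈ Acyc (contractG Y v w)) : invC Y v w c ∈ Acyc Y := by
  have hvw : v ≠ w := hY.ne
  refine ⟨⟨fun i j => ?_, ?_⟩, ?_⟩
  · constructor
    · intro hadj
      have hij : i ≠ j := hadj.ne
      by_cases hiw : w = i
      · by_cases hjv : j = v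
        · exact Or.inl (Or.inl ⟨hiw.symm, hjv⟩)
        · have hA : (contractG Y v w).Adj v j := by
            refine ⟨hvw, ?_, fun hh => hjv hh.symm, Or.inr (Or.inl ⟨rfl, hiw.symm ▸ hadj⟩)⟩
            exact fun hh => hij (hiw.symm.trans hh.symm)
          rcases (hc.1.1 v j).1 hA with h | h
          · exact Or.inl (Or.inr (Or.inl ⟨hiw.symm, hjv, hiw.symm ▸ hadj, h⟩))
          · exact Or.inr (Or.inr (Or.inr (Or.inl ⟨hiw.symm, hjv, hiw.symm ▸ hadj.symm, h⟩)))
      · have hiw' : i ≠ w := fun hh => hiw hh.symm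
        by_cases hjw : w = j
        · by_cases hiv : i = v
          · exact Or.inr (Or.inl ⟨hjw.symm, hiv⟩)
          · have hA : (contractG Y v w).Adj i v :=
              ⟨hiw', hvw, hiv, Or.inr (Or.inr ⟨rfl, hjw.symm ▸ hadj⟩)⟩
            rcases (hc.1.1 i v).1 hA with h | h
            · exact Or.inl (Or.inr (Or.inr (Or.inl ⟨hjw.symm, hiv, hjw.symm ▸ hadj, h⟩)))
            · exact Or.inr (Or.inr (Or.inl ⟨hjw.symm, hiv, hjw.symm ▸ hadj.symm, h⟩))
        · have hjw' : j ≠ w := fun hh => hjw hh.symm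
          have hA : (contractG Y v w).Adj i j := by
            refine ⟨hiw', hjw', hij, Or.inl ?_⟩
            rw [SimpleGraph.deleteEdges_adj, Set.mem_singleton_iff, Sym2.eq_iff]
            refine ⟨hadj, ?_⟩
            rintro (⟨-, hh⟩ | ⟨hh, -⟩)
            exacts [hjw' hh, hiw' hh]
          rcases (hc.1.1 i j).1 hA with h | h
          · exact Or.inl (Or.inr (Or.inr (Or.inr ⟨hiw', hjw', hadj, h⟩)))
          · exact Or.inr (Or.inr (Or.inr (Or.inr ⟨hjw', hiw', hadj.symm, h⟩)))
    · rintro (h | h)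
      · rcases h with ⟨rfl, rfl⟩ | ⟨rfl, -, h, -⟩ | ⟨rfl, -, h, -⟩ | ⟨-, -, h, -⟩
        exacts [hY.symm, h, h, h]
      · rcases h with ⟨rfl, rfl⟩ | ⟨rfl, -, h, -⟩ | ⟨rfl, -, h, -⟩ | ⟨-, -, h, -⟩
        exacts [hY, h.symm, h.symm, h.symm]
  · intro i j h1 h2
    rcases h1 with ⟨hiw, hjv⟩ | ⟨hiw, hjv, hadj, hc1⟩ | ⟨hjw, hiv, hadj, hc1⟩ | ⟨hiw, hjw, hadj, hc1⟩
    · rcases h2 with ⟨hjw, -⟩ | ⟨hjw, -⟩ | ⟨-, hjv', -⟩ | ⟨-, hiw', -⟩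
      · exact hvw (hjv.symm.trans hjw)
      · exact hvw (hjv.symm.trans hjw)
      · exact hjv' hjv
      · exact hiw' hiw
    · have hjw : j ≠ w := Ne.symm hadj.ne
      rcases h2 with ⟨hjw', -⟩ | ⟨hjw', -⟩ | ⟨-, -, -, h⟩ | ⟨-, hiw', -⟩
      · exact hjw hjw'
      · exact hjw hjw'
      · exact hc.1.2 v j hc1 h
      · exact hiw' hiw
    · have hiw : i ≠ w := hadj.ne
      rcases h2 with ⟨-, hiv'⟩ | ⟨-, -, -, h⟩ | ⟨hiw', -⟩ | ⟨hjw', -⟩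
      · exact hiv hiv'
      · exact hc.1.2 i v hc1 h
      · exact hiw hiw'
      · exact hjw' hjw
    · rcases h2 with ⟨hjw', -⟩ | ⟨hjw', -⟩ | ⟨hiw', -⟩ | ⟨-, -, -, h⟩
      · exact hjw hjw'
      · exact hjw hjw'
      · exact hiw hiw'
      · exact hc.1.2 i j hc1 h
  · intro x hx
    have main : ∀ a b, TransGen (invC Y v w c) a b →
        TransGen c (if a = w then v else a) (if b = w then v else b) ∨ (a = w ∧ b = v) := by
      intro a b h
      induction h with
      | single h =>
        rcases invC_proj h with h | h
        · exact Or.inr h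
        · exact Or.inl (TransGen.single h)
      | tail hab hstep ih =>
        rcases invC_proj hstep with ⟨hyw, hzv⟩ | h
        · rcases ih with ih | ⟨haw, hyv⟩
          · left
            rw [hzv, if_neg hvw]
            rw [hyw, if_pos rfl] at ih
            exact ih
          · exact absurd (hyv.symm.trans hyw) hvw
        · rcases ih with ih | ⟨haw, hyv⟩
          · exact Or.inl (ih.tail h)
          · left
            rw [haw, if_pos rfl]
            rw [hyv, if_neg hvw] at h
            exact TransGen.single h
    rcases main x x hx with h | ⟨hxw, hxv⟩
    · exact hc.2 _ h
    · exact hvw (hxv.symm.trans hxw)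

end Helpers2

section Helpers3

open Relation

variable [DecidableEq V] {Y : SimpleGraph V} {v w : V} {r t c : V → V → Prop}

lemma invC_rev_mem (hY : Y.Adj v w) (hc : c ∈ Acyc (contractG Y v w)) :
    revEdge (invC Y v w c) v w ∈ Acyc Y := by
  have ho := invC_mem hY hc
  have hwv : invC Y v w c w v := Or.inl ⟨rfl, rfl⟩
  rw [rev_eq ho hY.ne hwv]
  refine extend_mem hY (delRel_mem ho) (Or.inl ⟨rfl, rfl⟩) ?_
  intro hT
  have hproj : ∀ i j, delRel (invC Y v w c) v w i j →
      c (if i = w then v else i) (if j = w then v else j) := by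
    rintro i j ⟨hij, hp⟩
    rcases invC_proj hij with ⟨hiw, hjv⟩ | h
    · exact absurd (Or.inr ⟨hiw, hjv⟩) hp
    · exact h
  have h2 : TransGen c (if w = w then v else w) (if v = w then v else v) := TransGen.lift (fun x => if x = w then v else x) hproj _ _ hT
  simp only [if_pos rfl, if_neg hY.ne] at h2
  exact hc.2 v h2

lemma contract_invC (hY : Y.Adj v w) (hc : c ∈ Acyc (contractG Y v w)) :
    contractRel (invC Y v w c) v w = c := by
  have ho := invC_mem hY hc
  funext a b
  apply propext
  constructor
  · rintro ⟨haw, hbw, hab, h⟩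
    rcases h with ⟨h, hp⟩ | ⟨ha, h⟩ | ⟨hb, h⟩
    · rcases h with ⟨h, -⟩ | ⟨h, -⟩ | ⟨h, -⟩ | ⟨-, -, -, h⟩
      exacts [absurd h haw, absurd h haw, absurd h hbw, h]
    · rcases h with ⟨-, h⟩ | ⟨-, -, -, h⟩ | ⟨h, -⟩ | ⟨h, -⟩
      · exact absurd (ha.trans h.symm) hab
      · exact ha ▸ h
      · exact absurd h hbw
      · exact absurd rfl h
    · rcases h with ⟨h, -⟩ | ⟨h, -⟩ | ⟨-, -, -, h⟩ | ⟨-, h, -⟩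
      exacts [absurd h haw, absurd h haw, hb ▸ h, absurd rfl h]
  · intro h
    obtain ⟨haw, hbw, hab, hbig⟩ := adj_of_rel hc h
    refine ⟨haw, hbw, hab, ?_⟩
    rcases hbig with hdel | ⟨ha, hadj⟩ | ⟨hb, hadj⟩
    · rw [SimpleGraph.deleteEdges_adj, Set.mem_singleton_iff, Sym2.eq_iff] at hdel
      obtain ⟨hadj, hp⟩ := hdel
      rcases (ho.1.1 a b).1 hadj with hoab | hoba
      · exact Or.inl ⟨hoab, hp⟩
      · exfalso
        rcases hoba with ⟨h1, -⟩ | ⟨h1, -⟩ | ⟨h1, -⟩ | ⟨-, -, -, h1⟩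
        exacts [absurd h1 hbw, absurd h1 hbw, absurd h1 haw, hc.1.2 a b h h1]
    · rcases (ho.1.1 w b).1 hadj with howb | hobw
      · exact Or.inr (Or.inl ⟨ha, howb⟩)
      · exfalso
        rcases hobw with ⟨h1, -⟩ | ⟨h1, -⟩ | ⟨-, -, -, h1⟩ | ⟨-, h1, -⟩
        exacts [absurd h1 hbw, absurd h1 hbw, hc.1.2 a b h (ha ▸ h1), absurd rfl h1]
    · rcases (ho.1.1 a w).1 hadj with hoaw | howa
      · exact Or.inr (Or.inr ⟨hb, hoaw⟩)
      · exfalso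
        rcases howa with ⟨-, h1⟩ | ⟨-, -, -, h1⟩ | ⟨h1, -⟩ | ⟨h1, -⟩
        · exact hab (h1.trans hb.symm)
        · exact hc.1.2 a b h (hb ▸ h1)
        · exact haw h1
        · exact h1 rfl
  
lemma recover (hr : r ∈ Acyc Y) (hvw : v ≠ w) (hwv : r w v)
    (hrev : revEdge r v w ∈ Acyc Y) (i j : V) :
    r i j ↔ invC Y v w (contractRel r v w) i j := by
  have hC := contract_mem hr hvw hwv hrev
  constructor
  · intro h
    have hne := ne_of_rel hr h
    have hadj := adj_of_rel hr h
    by_cases hiw : i = w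
    · by_cases hjv : j = v
      · exact Or.inl ⟨hiw, hjv⟩
      · refine Or.inr (Or.inl ⟨hiw, hjv, hiw ▸ hadj, ?_⟩)
        refine ⟨hvw, fun hh => hne (hiw.trans hh.symm), fun hh => hjv hh.symm,
          Or.inr (Or.inl ⟨rfl, hiw ▸ h⟩)⟩
    · by_cases hjw : j = w
      · have hiv : i ≠ v := fun hh => hr.1.2 w v hwv (hh ▸ hjw ▸ h)
        refine Or.inr (Or.inr (Or.inl ⟨hjw, hiv, hjw ▸ hadj, ?_⟩))
        exact ⟨hiw, hvw, hiv, Or.inr (Or.inr ⟨rfl, hjw ▸ h⟩)⟩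
      · refine Or.inr (Or.inr (Or.inr ⟨hiw, hjw, hadj, hiw, hjw, hne, Or.inl ⟨h, ?_⟩⟩))
        rintro (⟨-, hh⟩ | ⟨hh, -⟩)
        exacts [hjw hh, hiw hh]
  · rintro (⟨hiw, hjv⟩ | ⟨hiw, hjv, hadj, hcc⟩ | ⟨hjw, hiv, hadj, hcc⟩ | ⟨hiw, hjw, hadj, hcc⟩)
    · exact hiw ▸ hjv ▸ hwv
    · rcases (hr.1.1 w j).1 hadj with h | h
      · exact hiw ▸ h
      · exfalso
        have hx : contractRel r v w j v :=
          ⟨Ne.symm hadj.ne, hvw, hjv, Or.inr (Or.inr ⟨rfl, h⟩)⟩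
        exact hC.1.2 v j hcc hx
    · rcases (hr.1.1 i w).1 hadj with h | h
      · exact hjw ▸ h
      · exfalso
        have hx : contractRel r v w v i :=
          ⟨hvw, hadj.ne, Ne.symm hiv, Or.inr (Or.inl ⟨rfl, h⟩)⟩
        exact hC.1.2 i v hcc hx
    · rcases (hr.1.1 i j).1 hadj with h | h
      · exact h
      · exfalso
        have hx : contractRel r v w j i := by
          refine ⟨hjw, hiw, Ne.symm hadj.ne, Or.inl ⟨h, ?_⟩⟩
          rintro (⟨-, hh⟩ | ⟨hh, -⟩)
          exacts [hiw hh, hjw hh]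
        exact hC.1.2 i j hcc hx

end Helpers3

section BetaGamma

open Relation

variable [DecidableEq V] {Y : SimpleGraph V} {v w : V}

open Classical in
/-- The bijection β. -/
noncomputable def betaFn (Y : SimpleGraph V) (v w : V) (hvw : v ≠ w) :
    ↥(Acyc Y) → (↥(Acyc (Y.deleteEdges {s(v,w)})) ⊕ ↥(Acyc (contractG Y v w))) :=
  fun o => if h : o.1 w v ∧ revEdge o.1 v w ∈ Acyc Y then
      Sum.inr ⟨contractRel o.1 v w, contract_mem o.2 hvw h.1 h.2⟩
    else Sum.inl ⟨delRel o.1 v w, delRel_mem o.2⟩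

open Classical in
/-- The inverse of β. -/
noncomputable def gammaFn (Y : SimpleGraph V) (v w : V) (hY : Y.Adj v w) :
    (↥(Acyc (Y.deleteEdges {s(v,w)})) ⊕ ↥(Acyc (contractG Y v w))) → ↥(Acyc Y) :=
  Sum.elim
    (fun tp => if hd : Relation.TransGen tp.1 w v then
        ⟨extend tp.1 w v, extend_mem hY tp.2 (Or.inr ⟨rfl, rfl⟩)
          (fun hvwp => tp.2.2 w (hd.trans hvwp))⟩
      else ⟨extend tp.1 v w, extend_mem hY tp.2 (Or.inl ⟨rfl, rfl⟩) hd⟩)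
    (fun cp => ⟨invC Y v w cp.1, invC_mem hY cp.2⟩)

lemma betaFn_pos (hvw : v ≠ w) (o : ↥(Acyc Y))
    (h : o.1 w v ∧ revEdge o.1 v w ∈ Acyc Y) :
    betaFn Y v w hvw o = Sum.inr ⟨contractRel o.1 v w, contract_mem o.2 hvw h.1 h.2⟩ := by
  unfold betaFn
  exact dif_pos h

lemma betaFn_neg (hvw : v ≠ w) (o : ↥(Acyc Y))
    (h : ¬(o.1 w v ∧ revEdge o.1 v w ∈ Acyc Y)) :
    betaFn Y v w hvw o = Sum.inl ⟨delRel o.1 v w, delRel_mem o.2⟩ := by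
  unfold betaFn
  exact dif_neg h

lemma gammaFn_inl_pos (hY : Y.Adj v w) (tp : ↥(Acyc (Y.deleteEdges {s(v,w)})))
    (hd : Relation.TransGen tp.1 w v) :
    gammaFn Y v w hY (Sum.inl tp) = ⟨extend tp.1 w v, extend_mem hY tp.2 (Or.inr ⟨rfl, rfl⟩)
      (fun hvwp => tp.2.2 w (hd.trans hvwp))⟩ := by
  unfold gammaFn
  rw [Sum.elim_inl]
  exact dif_pos hd

lemma gammaFn_inl_neg (hY : Y.Adj v w) (tp : ↥(Acyc (Y.deleteEdges {s(v,w)})))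
    (hd : ¬ Relation.TransGen tp.1 w v) :
    gammaFn Y v w hY (Sum.inl tp) =
      ⟨extend tp.1 v w, extend_mem hY tp.2 (Or.inl ⟨rfl, rfl⟩) hd⟩ := by
  unfold gammaFn
  rw [Sum.elim_inl]
  exact dif_neg hd

lemma gammaFn_inr (hY : Y.Adj v w) (cp : ↥(Acyc (contractG Y v w))) :
    gammaFn Y v w hY (Sum.inr cp) = ⟨invC Y v w cp.1, invC_mem hY cp.2⟩ := by
  unfold gammaFn
  rw [Sum.elim_inr]

end BetaGamma


/-- for an acyclic orientation O and a non-bridge edge e = {v,w},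
exactly one of "reversing e breaks acyclicity" and "reversing e preserves
acyclicity" holds, and the map β_e — sending O to its restriction to Y−e when
the reversal is not acyclic or e is oriented (v,w), and to the induced
orientation of Y/e when e is oriented (w,v) and the reversal is acyclic —
is a bijection from Acyc(Y) onto Acyc(Y−e) ∪ Acyc(Y/e). -/
theorem beta_bijection {V : Type*} [Fintype V] [DecidableEq V]
    (Y : SimpleGraph V) (v w : V) (he : Y.Adj v w)
    (hnonbridge : (Y.deleteEdges {s(v, w)}).Reachable v w) :
    (∀ r ∈ Acyc Y, Xor' (revEdge r v w ∉ Acyc Y) (revEdge r v w ∈ Acyc Y)) ∧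
    ∃ β : Acyc Y → (Acyc (Y.deleteEdges {s(v, w)}) ⊕ Acyc (contractG Y v w)),
      Function.Bijective β ∧
      (∀ o : Acyc Y,
        (revEdge o.1 v w ∉ Acyc Y ∨ (revEdge o.1 v w ∈ Acyc Y ∧ o.1 v w)) →
        ∃ h, β o = Sum.inl ⟨delRel o.1 v w, h⟩) ∧
      (∀ o : Acyc Y, revEdge o.1 v w ∈ Acyc Y → o.1 w v →
        ∃ h, β o = Sum.inr ⟨contractRel o.1 v w, h⟩) := by
  classical
  have hvw : v ≠ w := he.ne
  constructor
  · intro r hr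
    by_cases h : revEdge r v w ∈ Acyc Y
    · exact Or.inr ⟨h, not_not_intro h⟩
    · exact Or.inl ⟨h, h⟩
  · refine ⟨betaFn Y v w hvw, ?_, ?_, ?_⟩
    · rw [Function.bijective_iff_has_inverse]
      refine ⟨gammaFn Y v w he, ?_, ?_⟩
      · rintro ⟨r, hr⟩
        by_cases h : r w v ∧ revEdge r v w ∈ Acyc Y
        · rw [betaFn_pos hvw ⟨r, hr⟩ h, gammaFn_inr he]
          exact Subtype.ext (funext fun i => funext fun j =>
            propext (recover hr hvw h.1 h.2 i j).symm)
        · rw [betaFn_neg hvw ⟨r, hr⟩ h]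
          by_cases hrwv : r w v
          · have hrevn : revEdge r v w ∉ Acyc Y := fun hh => h ⟨hrwv, hh⟩
            have hd : Relation.TransGen (delRel r v w) w v := by
              by_contra hd
              apply hrevn
              rw [rev_eq hr hvw hrwv]
              exact extend_mem he (delRel_mem hr) (Or.inl ⟨rfl, rfl⟩) hd
            rw [gammaFn_inl_pos he _ hd]
            apply Subtype.ext
            funext i j
            apply propext
            constructor
            · rintro (hh | ⟨rfl, rfl⟩)
              exacts [hh.1, hrwv]
            · intro hh
              by_cases hp : (i = v ∧ j = w) ∨ (i = w ∧ j = v)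
              · rcases hp with ⟨hiv, hjw⟩ | ⟨hiw, hjv⟩
                · exact absurd (hiv ▸ hjw ▸ hh) (hr.1.2 w v hrwv)
                · exact Or.inr ⟨hiw, hjv⟩
              · exact Or.inl ⟨hh, hp⟩
          · have hrvw : r v w := by
              rcases (hr.1.1 v w).1 he with hh | hh
              exacts [hh, absurd hh hrwv]
            have hd : ¬ Relation.TransGen (delRel r v w) w v :=
              fun hT => hr.2 v (Relation.TransGen.head hrvw (delRel_transGen hT))
            rw [gammaFn_inl_neg he _ hd]
            apply Subtype.ext
            funext i j
            apply propext
            constructor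
            · rintro (hh | ⟨rfl, rfl⟩)
              exacts [hh.1, hrvw]
            · intro hh
              by_cases hp : (i = v ∧ j = w) ∨ (i = w ∧ j = v)
              · rcases hp with ⟨hiv, hjw⟩ | ⟨hiw, hjv⟩
                · exact Or.inr ⟨hiv, hjw⟩
                · exact absurd (hiw ▸ hjv ▸ hh) hrwv
              · exact Or.inl ⟨hh, hp⟩
      · rintro (⟨t, ht⟩ | ⟨c, hc⟩)
        · by_cases hd : Relation.TransGen t w v
          · rw [gammaFn_inl_pos he _ hd]
            have hwv' : extend t w v w v := Or.inr ⟨rfl, rfl⟩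
            have ho : extend t w v ∈ Acyc Y :=
              extend_mem he ht (Or.inr ⟨rfl, rfl⟩) (fun hvwp => ht.2 w (hd.trans hvwp))
            have hrevn : revEdge (extend t w v) v w ∉ Acyc Y := by
              rw [rev_eq ho hvw hwv', delRel_extend ht (Or.inr ⟨rfl, rfl⟩)]
              intro hmem
              apply hmem.2 v
              exact Relation.TransGen.head (Or.inr ⟨rfl, rfl⟩)
                (Relation.TransGen.mono (fun i j hh => Or.inl hh) _ _ hd)
            rw [betaFn_neg hvw _ (fun hh => hrevn hh.2)]
            exact congrArg Sum.inl (Subtype.ext (delRel_extend ht (Or.inr ⟨rfl, rfl⟩)))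
          · rw [gammaFn_inl_neg he _ hd]
            have hnwv : ¬ extend t v w w v := by
              rintro (hh | ⟨hh, -⟩)
              exacts [(t_pair_false ht).2 hh, hvw hh.symm]
            rw [betaFn_neg hvw _ (fun hh => hnwv hh.1)]
            exact congrArg Sum.inl (Subtype.ext (delRel_extend ht (Or.inl ⟨rfl, rfl⟩)))
        · rw [gammaFn_inr he]
          have h1 : invC Y v w c w v := Or.inl ⟨rfl, rfl⟩
          have h2 := invC_rev_mem he hc
          rw [betaFn_pos hvw _ ⟨h1, h2⟩]
          exact congrArg Sum.inr (Subtype.ext (contract_invC he hc))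
    · intro o hcond
      have hneg : ¬ (o.1 w v ∧ revEdge o.1 v w ∈ Acyc Y) := by
        rcases hcond with h | ⟨h1, h2⟩
        · exact fun hh => h hh.2
        · exact fun hh => o.2.1.2 v w h2 hh.1
      exact ⟨delRel_mem o.2, betaFn_neg hvw o hneg⟩
    · intro o h1 h2
      exact ⟨contract_mem o.2 hvw h2 h1, betaFn_pos hvw o ⟨h2, h1⟩⟩

end AcycPaper
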